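/- arXiv:1801.05951 — 3 statements merged into one kernel-verified Lean document; each statement's English description precedes it below -/
import Mathlib

section
/- Let P, N, σ² > 0 satisfy σ² < P²/N − P, and for α ∈ (0, √(N/(P+σ²))] define R(α) = (1/2)·log₂( 1 + (1−α)² P / (N − α² P) ), noting that N − α²P > 0 on this interval. Then the minimum of R over the interval (0, √(N/(P+σ²))] is attained at α = N/P and equals (1/2)·log₂(P/N); that is, R(N/P) = (1/2)·log₂(P/N) and R(α) ≥ (1/2)·log₂(P/N) for all α ∈ (0, √(N/(P+σ²))]. -/
/-- Let `P, N, σ² > 0` with `σ² < P²/N - P`, and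
`R(α) = (1/2)·log₂(1 + (1-α)²P/(N - α²P))` for `α ∈ (0, √(N/(P+σ²))]`.
Then the minimum of `R` over this interval is attained at `α = N/P`, where it
equals `(1/2)·log₂(P/N)`. -/
theorem scale_and_babble_min_low_noise (P N σ2 : ℝ)
    (hP : 0 < P) (hN : 0 < N) (hσ : 0 < σ2) (h : σ2 < P ^ 2 / N - P) :
    N / P ∈ Set.Ioc (0 : ℝ) (Real.sqrt (N / (P + σ2))) ∧
    (1 / 2) * Real.logb 2 (1 + (1 - N / P) ^ 2 * P / (N - (N / P) ^ 2 * P)) =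
      (1 / 2) * Real.logb 2 (P / N) ∧
    ∀ α ∈ Set.Ioc (0 : ℝ) (Real.sqrt (N / (P + σ2))),
      (1 / 2) * Real.logb 2 (P / N) ≤
        (1 / 2) * Real.logb 2 (1 + (1 - α) ^ 2 * P / (N - α ^ 2 * P)) := by
  have hPσ : 0 < P + σ2 := by linarith
  have hkey : N * (P + σ2) < P ^ 2 := by
    have h2 : σ2 + P < P ^ 2 / N := by linarith
    calc N * (P + σ2) < N * (P ^ 2 / N) := by
          apply mul_lt_mul_of_pos_left _ hN; linarith
      _ = P ^ 2 := by field_simp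
  have hNP : N < P := by nlinarith
  have hmem : N / P ∈ Set.Ioc (0 : ℝ) (Real.sqrt (N / (P + σ2))) := by
    constructor
    · positivity
    · rw [show (N / P) = Real.sqrt ((N / P) ^ 2) by
        rw [Real.sqrt_sq (by positivity)]]
      apply Real.sqrt_le_sqrt
      rw [div_pow, div_le_div_iff₀ (by positivity) hPσ]
      nlinarith
  refine ⟨hmem, ?_, ?_⟩
  · congr 1
    have h1 : N - (N / P) ^ 2 * P = N * (P - N) / P := by field_simp
    have h2 : (1 - N / P) ^ 2 * P = (P - N) ^ 2 / P := by field_simp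
    have hPN' : P - N ≠ 0 := sub_ne_zero.mpr (ne_of_lt hNP).symm
    rw [h1, h2]
    have h3 : (P - N) ^ 2 / P / (N * (P - N) / P) = (P - N) / N := by
      field_simp
    rw [h3]
    congr 1
    field_simp
    ring
  · intro α ⟨hα0, hα1⟩
    have hα2 : α ^ 2 ≤ N / (P + σ2) := by
      have := Real.sq_sqrt (le_of_lt (div_pos hN hPσ))
      nlinarith [Real.sqrt_nonneg (N / (P + σ2))]
    have hden : 0 < N - α ^ 2 * P := by
      have := (le_div_iff₀ hPσ).mp hα2
      nlinarith
    gcongr 1 / 2 * ?_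
    apply Real.logb_le_logb_of_le (by norm_num) (by positivity)
    have heq : 1 + (1 - α) ^ 2 * P / (N - α ^ 2 * P) =
        ((N - α ^ 2 * P) + (1 - α) ^ 2 * P) / (N - α ^ 2 * P) := by
      field_simp
    rw [heq, div_le_div_iff₀ hN hden]
    nlinarith [sq_nonneg (α * P - N)]
end

section
/- Let P, N, σ² > 0 satisfy σ² ≥ max{P²/N − P, N − P}, and for α ∈ (0, √(N/(P+σ²))] define R(α) = (1/2)·log₂( 1 + (1−α)² P / (N − α² P) ), noting that N − α²P > 0 on this interval. Then the minimum of R over the interval (0, √(N/(P+σ²))] is attained at the right endpoint α = √(N/(P+σ²)) and equals R_myop := (1/2)·log₂( ((P+σ²)(P+N) − 2P√(N(P+σ²))) / (N σ²) ). -/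
/-- Let `P, N, σ² > 0` with `σ² ≥ max{P²/N - P, N - P}`, and
`R(α) = (1/2)·log₂(1 + (1-α)²P/(N - α²P))` for `α ∈ (0, √(N/(P+σ²))]`.
Then the minimum of `R` over this interval is attained at the right endpoint
`α = √(N/(P+σ²))` and equals
`R_myop = (1/2)·log₂(((P+σ²)(P+N) - 2P√(N(P+σ²)))/(Nσ²))`. -/
theorem scale_and_babble_min_high_noise (P N σ2 : ℝ)
    (hP : 0 < P) (hN : 0 < N) (hσ : 0 < σ2)
    (h1 : P ^ 2 / N - P ≤ σ2) (h2 : N - P ≤ σ2) :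
    (1 / 2) * Real.logb 2 (1 + (1 - Real.sqrt (N / (P + σ2))) ^ 2 * P /
        (N - Real.sqrt (N / (P + σ2)) ^ 2 * P)) =
      (1 / 2) * Real.logb 2
        (((P + σ2) * (P + N) - 2 * P * Real.sqrt (N * (P + σ2))) / (N * σ2)) ∧
    ∀ α ∈ Set.Ioc (0 : ℝ) (Real.sqrt (N / (P + σ2))),
      (1 / 2) * Real.logb 2
          (((P + σ2) * (P + N) - 2 * P * Real.sqrt (N * (P + σ2))) / (N * σ2)) ≤
        (1 / 2) * Real.logb 2 (1 + (1 - α) ^ 2 * P / (N - α ^ 2 * P)) := by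
  have hPσ : 0 < P + σ2 := by linarith
  set s := Real.sqrt (N / (P + σ2)) with hs_def
  have hs_nonneg : 0 ≤ s := Real.sqrt_nonneg _
  have hs2 : s ^ 2 = N / (P + σ2) := Real.sq_sqrt (by positivity)
  have hs_pos : 0 < s := Real.sqrt_pos.2 (by positivity)
  have hs1 : s ≤ 1 := by
    rw [hs_def, show (1:ℝ) = Real.sqrt 1 by simp]
    apply Real.sqrt_le_sqrt
    rw [div_le_one hPσ]; linarith
  have hsPN : s * P ≤ N := by
    have h1' : P ^ 2 ≤ N * (P + σ2) := by
      have := (div_le_iff₀ hN).mp (by linarith : P ^ 2 / N ≤ σ2 + P)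
      nlinarith
    have : s ≤ N / P := by
      rw [hs_def, show N / P = Real.sqrt ((N / P) ^ 2) from
        (Real.sqrt_sq (by positivity)).symm]
      apply Real.sqrt_le_sqrt
      rw [div_pow, div_le_div_iff₀ hPσ (by positivity)]
      nlinarith
    calc s * P ≤ (N / P) * P := by nlinarith
      _ = N := by field_simp
  have hden_s : N - s ^ 2 * P = N * σ2 / (P + σ2) := by
    rw [hs2]; field_simp; ring
  have hden_s_pos : 0 < N - s ^ 2 * P := by rw [hden_s]; positivity
  have hsqrt : Real.sqrt (N * (P + σ2)) = s * (P + σ2) := by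
    rw [hs_def, ← Real.sqrt_sq hPσ.le, ← Real.sqrt_mul (by positivity)]
    congr 1
    field_simp
    ring_nf; rw [Real.sq_sqrt (by nlinarith [sq_nonneg (P + σ2)])]
  clear_value s
  -- equality part
  have heq : 1 + (1 - s) ^ 2 * P / (N - s ^ 2 * P) =
      ((P + σ2) * (P + N) - 2 * P * Real.sqrt (N * (P + σ2))) / (N * σ2) := by
    rw [hsqrt]
    rw [hden_s]
    have hNP : N = s ^ 2 * (P + σ2) := by rw [hs2]; field_simp
    field_simp
    nlinarith [hNP]
  refine ⟨by rw [heq], ?_⟩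
  intro α hα
  obtain ⟨hα0, hαs⟩ := hα
  have hα1 : α ≤ 1 := le_trans hαs hs1
  have hden_α_pos : 0 < N - α ^ 2 * P := by
    have : α ^ 2 ≤ s ^ 2 := by nlinarith
    nlinarith
  have hgs_ge : (1:ℝ) ≤ 1 + (1 - s) ^ 2 * P / (N - s ^ 2 * P) := by
    have : 0 ≤ (1 - s) ^ 2 * P / (N - s ^ 2 * P) := by positivity
    linarith
  have hmain : 1 + (1 - s) ^ 2 * P / (N - s ^ 2 * P) ≤
      1 + (1 - α) ^ 2 * P / (N - α ^ 2 * P) := by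
    have key : (1 - s) ^ 2 * P * (N - α ^ 2 * P) ≤ (1 - α) ^ 2 * P * (N - s ^ 2 * P) := by
      have hfac : 0 ≤ (s - α) * ((1 - α) * (N - P * s) + (1 - s) * (N - P * α)) := by
        apply mul_nonneg (by linarith)
        apply add_nonneg
        · apply mul_nonneg (by linarith)
          nlinarith
        · apply mul_nonneg (by linarith)
          nlinarith
      have hid : (1 - α) ^ 2 * P * (N - s ^ 2 * P) - (1 - s) ^ 2 * P * (N - α ^ 2 * P)
          = P * ((s - α) * ((1 - α) * (N - P * s) + (1 - s) * (N - P * α))) := by ring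
      linarith [mul_nonneg hP.le hfac, hid]
    have := (div_le_div_iff₀ hden_s_pos hden_α_pos).mpr key
    linarith
  rw [← heq]
  have hlog := Real.logb_le_logb_of_le one_lt_two (lt_of_lt_of_le one_pos hgs_ge) hmain
  linarith
end

section
/- Let 0 < N < P and ε > 0. There exists n₀ ∈ ℕ such that for all n ≥ n₀ and every finite set C of points on the sphere {x ∈ ℝⁿ : ‖x‖₂ = √(nP)} with |C| ≥ 2^{n((1/2)·log₂(P/N) + ε)}, there exists a point y ∈ ℝⁿ with ‖y‖₂ = √(n(P−N)) such that |{x ∈ C : ‖x − y‖₂ ≤ √(nN)}| ≥ 2^{nε/2}. In other words, any spherical code of rate exceeding (1/2)·log₂(P/N) has list-size exponentially large in n against an omniscient adversary of power √(nN). -/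
set_option maxHeartbeats 1000000

open MeasureTheory Metric Set Real
open scoped ENNReal RealInnerProductSpace BigOperators

noncomputable section ListDecAux

/-- Volume of the unit closed ball in `EuclideanSpace ℝ (Fin m)`. -/
def unitW (m : ℕ) : ℝ≥0∞ := volume (closedBall (0 : EuclideanSpace ℝ (Fin m)) 1)

lemma unitW_pos (m : ℕ) : 0 < unitW m :=
  measure_closedBall_pos volume 0 one_pos

lemma unitW_ne_top (m : ℕ) : unitW m ≠ ⊤ := measure_closedBall_lt_top.ne

/-- A slab: first coordinate in `[a,b]`, remaining coordinates in a ball of radius `r`. -/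
def slabSet (m : ℕ) (a b r : ℝ) : Set (EuclideanSpace ℝ (Fin (m+1))) :=
  {y | y 0 ∈ Set.Icc a b ∧ ∑ i : Fin m, (y i.succ)^2 ≤ r^2}

lemma measurableSet_slabSet (m : ℕ) (a b r : ℝ) : MeasurableSet (slabSet m a b r) := by
  have h0 : Measurable (fun y : EuclideanSpace ℝ (Fin (m+1)) => y 0) := by
    exact (measurable_pi_apply 0).comp (MeasurableEquiv.toLp 2 (Fin (m+1) → ℝ)).symm.measurable
  have h1 : Measurable (fun y : EuclideanSpace ℝ (Fin (m+1)) => ∑ i : Fin m, (y i.succ)^2) := by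
    refine Finset.measurable_sum _ (fun i _ => ?_)
    exact (((measurable_pi_apply i.succ).comp
      (MeasurableEquiv.toLp 2 (Fin (m+1) → ℝ)).symm.measurable).pow_const 2)
  exact ((measurableSet_Icc.preimage h0).inter (measurableSet_le h1 measurable_const))

lemma volume_ball_set (m : ℕ) {r : ℝ} (hr : 0 ≤ r) :
    volume {w : Fin m → ℝ | ∑ i, (w i)^2 ≤ r^2} = ENNReal.ofReal (r ^ m) * unitW m := by
  have hQmeas : MeasurableSet {w : Fin m → ℝ | ∑ i, (w i)^2 ≤ r^2} :=
    measurableSet_le (Finset.measurable_sum _ fun i _ => (measurable_pi_apply i).pow_const 2)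
      measurable_const
  have hpre : (MeasurableEquiv.toLp 2 (Fin m → ℝ)).symm ⁻¹' {w | ∑ i, (w i)^2 ≤ r^2}
      = closedBall (0 : EuclideanSpace ℝ (Fin m)) r := by
    ext z
    have hz : ∀ i, ‖z i‖^2 = (z i)^2 := fun i => by rw [Real.norm_eq_abs, sq_abs]
    have hsum : ∑ i, ‖z i‖^2 = ∑ i, (z i)^2 := Finset.sum_congr rfl fun i _ => hz i
    constructor
    · intro h
      have h' : ∑ i, (z i)^2 ≤ r^2 := h
      simp only [mem_closedBall, dist_zero_right, EuclideanSpace.norm_eq]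
      rw [Real.sqrt_le_left hr, hsum]
      exact h'
    · intro h
      simp only [mem_closedBall, dist_zero_right, EuclideanSpace.norm_eq] at h
      rw [Real.sqrt_le_left hr, hsum] at h
      exact h
  have h1 := (EuclideanSpace.volume_preserving_symm_measurableEquiv_toLp (Fin m)).measure_preimage
      hQmeas.nullMeasurableSet
  rw [hpre] at h1
  rw [← h1, Measure.addHaar_closedBall' volume _ hr, finrank_euclideanSpace_fin, unitW]

lemma volume_slabSet (m : ℕ) (a b r : ℝ) (hr : 0 ≤ r) :
    volume (slabSet m a b r)
      = ENNReal.ofReal (b - a) * (ENNReal.ofReal (r ^ m) * unitW m) := by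
  classical
  set Q : Set (Fin m → ℝ) := {w | ∑ i, (w i)^2 ≤ r^2} with hQ
  have hQmeas : MeasurableSet Q :=
    measurableSet_le (Finset.measurable_sum _ fun i _ => (measurable_pi_apply i).pow_const 2)
      measurable_const
  set S' : Set (Fin (m+1) → ℝ) := {y | y 0 ∈ Set.Icc a b ∧ ∑ i : Fin m, (y i.succ)^2 ≤ r^2}
    with hS'
  have hS'' : S' = (MeasurableEquiv.piFinSuccAbove (fun _ : Fin (m+1) => ℝ) 0) ⁻¹'
      ((Set.Icc a b) ×ˢ Q) := rfl
  have hS'meas : MeasurableSet S' := by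
    rw [hS'']
    exact (MeasurableEquiv.piFinSuccAbove (fun _ : Fin (m+1) => ℝ) 0).measurable
      (measurableSet_Icc.prod hQmeas)
  have h1 : volume (slabSet m a b r) = volume S' := by
    have h := (EuclideanSpace.volume_preserving_symm_measurableEquiv_toLp (Fin (m+1))).measure_preimage
      hS'meas.nullMeasurableSet
    rw [← h]; rfl
  have h2 : volume S' = ENNReal.ofReal (b - a) * (ENNReal.ofReal (r ^ m) * unitW m) := by
    rw [hS'', (volume_preserving_piFinSuccAbove (fun _ : Fin (m+1) => ℝ) 0).measure_preimage
      (measurableSet_Icc.prod hQmeas).nullMeasurableSet]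
    rw [show (volume : Measure (ℝ × (Fin m → ℝ))) = (volume : Measure ℝ).prod volume from rfl]
    rw [Measure.prod_prod, Real.volume_Icc, volume_ball_set m hr]
  rw [h1, h2]

end ListDecAux

section Cap

lemma norm_sq_eq_sum_coords {m : ℕ} (w : EuclideanSpace ℝ (Fin m)) :
    ‖w‖^2 = ∑ i, (w i)^2 := by
  rw [EuclideanSpace.norm_eq, Real.sq_sqrt (by positivity)]
  exact Finset.sum_congr rfl fun i _ => by rw [Real.norm_eq_abs, sq_abs]

lemma sum_succ_sq_eq {m : ℕ} (w : EuclideanSpace ℝ (Fin (m+1))) :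
    ∑ i : Fin m, (w i.succ)^2 = ‖w - (w 0) • (EuclideanSpace.single 0 1 : EuclideanSpace ℝ (Fin (m+1)))‖^2 := by
  rw [norm_sq_eq_sum_coords, Fin.sum_univ_succ]
  have h0 : (w - (w 0) • (EuclideanSpace.single 0 1 : EuclideanSpace ℝ (Fin (m+1)))) 0 = 0 := by
    simp [EuclideanSpace.single_apply]
  have hs : ∀ i : Fin m,
      (w - (w 0) • (EuclideanSpace.single 0 1 : EuclideanSpace ℝ (Fin (m+1)))) i.succ = w i.succ := by
    intro i
    simp [EuclideanSpace.single_apply, Fin.succ_ne_zero i]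
  rw [h0]
  simp only [hs]
  ring

/-- The "cap cylinder" in direction `u`. -/
def capSet {m : ℕ} (u : EuclideanSpace ℝ (Fin (m+1))) (a b r : ℝ) :
    Set (EuclideanSpace ℝ (Fin (m+1))) :=
  {y | ⟪u, y⟫ ∈ Set.Icc a b ∧ ‖y - ⟪u, y⟫ • u‖ ≤ r}

lemma capSet_eq_preimage {m : ℕ} (u : EuclideanSpace ℝ (Fin (m+1))) (hu : ‖u‖ = 1)
    (a b r : ℝ) (hr : 0 ≤ r) :
    ∃ f : EuclideanSpace ℝ (Fin (m+1)) ≃ₗᵢ[ℝ] EuclideanSpace ℝ (Fin (m+1)),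
      capSet u a b r = f ⁻¹' slabSet m a b r := by
  classical
  set e₀ : EuclideanSpace ℝ (Fin (m+1)) := EuclideanSpace.single 0 1 with he₀def
  have he₀ : ‖e₀‖ = 1 := by
    rw [he₀def, EuclideanSpace.norm_single, norm_one]
  refine ⟨Submodule.reflection (ℝ ∙ (u - e₀))ᗮ, ?_⟩
  set f := Submodule.reflection (ℝ ∙ (u - e₀))ᗮ with hf
  have hfu : f u = e₀ := Submodule.reflection_sub (by rw [hu, he₀])
  ext y
  have h0 : (f y) 0 = ⟪u, y⟫ := by
    have h := f.inner_map_map u y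
    rw [hfu] at h
    rw [← h, he₀def, EuclideanSpace.inner_single_left]
    simp
  have h1 : ∑ i : Fin m, ((f y) i.succ)^2 = ‖y - ⟪u,y⟫ • u‖^2 := by
    have hsub : f y - ((f y) 0) • e₀ = f (y - ⟪u,y⟫ • u) := by
      rw [h0, f.map_sub, f.map_smul, hfu]
    rw [sum_succ_sq_eq (f y), ← he₀def, hsub, f.norm_map]
  have hiff : ‖y - ⟪u,y⟫ • u‖ ≤ r ↔ ‖y - ⟪u,y⟫ • u‖^2 ≤ r^2 := by
    constructor
    · intro h; exact pow_le_pow_left₀ (norm_nonneg _) h 2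
    · intro h
      have h2 := Real.sqrt_le_sqrt h
      rwa [Real.sqrt_sq (norm_nonneg _), Real.sqrt_sq hr] at h2
  simp only [capSet, slabSet, Set.mem_preimage, Set.mem_setOf_eq, h0, h1]
  exact and_congr Iff.rfl hiff

lemma volume_capSet {m : ℕ} (u : EuclideanSpace ℝ (Fin (m+1))) (hu : ‖u‖ = 1)
    (a b r : ℝ) (hr : 0 ≤ r) :
    volume (capSet u a b r)
      = ENNReal.ofReal (b - a) * (ENNReal.ofReal (r ^ m) * unitW m) := by
  obtain ⟨f, hfeq⟩ := capSet_eq_preimage u hu a b r hr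
  rw [hfeq, f.measurePreserving.measure_preimage (measurableSet_slabSet m a b r).nullMeasurableSet,
    volume_slabSet m a b r hr]

lemma closedBall_subset_slabSet (m : ℕ) {ρ : ℝ} (hρ : 0 ≤ ρ) :
    closedBall (0 : EuclideanSpace ℝ (Fin (m+1))) ρ ⊆ slabSet m (-ρ) ρ ρ := by
  intro y hy
  rw [mem_closedBall, dist_zero_right] at hy
  have hn2 : ‖y‖^2 = ∑ j, (y j)^2 := norm_sq_eq_sum_coords y
  have hsum : ∑ j, (y j)^2 ≤ ρ^2 := by nlinarith [norm_nonneg y]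
  have hsplit : (y 0)^2 + ∑ i : Fin m, (y i.succ)^2 = ∑ j, (y j)^2 := (Fin.sum_univ_succ (fun j : Fin (m+1) => (y j)^2)).symm
  have hnn : (0:ℝ) ≤ ∑ i : Fin m, (y i.succ)^2 := Finset.sum_nonneg fun i _ => sq_nonneg _
  refine ⟨?_, by nlinarith [sq_nonneg (y 0)]⟩
  have h2 : (y 0)^2 ≤ ρ^2 := by nlinarith
  have h3 := Real.sqrt_le_sqrt h2
  rw [Real.sqrt_sq_eq_abs, Real.sqrt_sq hρ] at h3
  exact ⟨neg_le_of_abs_le h3, le_of_abs_le h3⟩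

end Cap

section Geometry

lemma mem_cone_of_mem_capSet {m : ℕ} {P N d : ℝ} (hN : 0 < N) (hNP : N < P)
    (hd0 : 0 < d) (hd1 : d ≤ 1)
    (x y : EuclideanSpace ℝ (Fin (m+1)))
    (hx : ‖x‖ = Real.sqrt (((m+1 : ℕ) : ℝ) * P))
    (hy : y ∈ capSet (‖x‖⁻¹ • x)
        (Real.sqrt (((m+1 : ℕ) : ℝ) * (P-N)) * Real.sqrt (1 - N/P))
        (Real.sqrt (((m+1 : ℕ) : ℝ) * (P-N)) * Real.sqrt (1 - (N/P)*d^2))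
        (Real.sqrt (((m+1 : ℕ) : ℝ) * (P-N)) * Real.sqrt (N/P) * d)) :
    ‖y‖ ≤ Real.sqrt (((m+1 : ℕ) : ℝ) * (P-N))
      ∧ Real.sqrt (((m+1 : ℕ) : ℝ) * (P-N)) * ‖y‖ ≤ ⟪x, y⟫ ∧ y ≠ 0 := by
  have hP : 0 < P := hN.trans hNP
  set nR : ℝ := ((m+1 : ℕ) : ℝ) with hnRdef
  have hnR : 1 ≤ nR := by rw [hnRdef]; exact_mod_cast Nat.succ_le_succ (Nat.zero_le m)
  have hnR0 : 0 < nR := lt_of_lt_of_le one_pos hnR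
  set ρ : ℝ := Real.sqrt (nR * (P-N)) with hρdef
  have hρpos : 0 < ρ := Real.sqrt_pos.mpr (mul_pos hnR0 (by linarith))
  have hρ2 : ρ^2 = nR * (P-N) := Real.sq_sqrt (mul_pos hnR0 (by linarith)).le
  have hNP1 : N/P < 1 := (div_lt_one hP).mpr hNP
  have hNP0 : 0 < N/P := div_pos hN hP
  set s : ℝ := Real.sqrt (N/P) with hsdef
  have hs2 : s^2 = N/P := Real.sq_sqrt hNP0.le
  have hs0 : 0 < s := Real.sqrt_pos.mpr hNP0
  set c1 : ℝ := Real.sqrt (1 - N/P) with hc1def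
  have hc12 : c1^2 = 1 - N/P := Real.sq_sqrt (by linarith)
  have hc10 : 0 < c1 := Real.sqrt_pos.mpr (by linarith)
  have hdd : d^2 ≤ 1 := pow_le_one₀ hd0.le hd1
  have hd2 : (N/P)*d^2 ≤ N/P := mul_le_of_le_one_right hNP0.le hdd
  set c2 : ℝ := Real.sqrt (1 - (N/P)*d^2) with hc2def
  have hc22 : c2^2 = 1 - (N/P)*d^2 := Real.sq_sqrt (by linarith)
  have hc20 : 0 < c2 := Real.sqrt_pos.mpr (by linarith)
  have hx0 : x ≠ 0 := by
    intro h
    rw [h, norm_zero] at hx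
    have h2 : (0:ℝ) < Real.sqrt (nR * P) := Real.sqrt_pos.mpr (mul_pos hnR0 hP)
    rw [← hx] at h2; exact lt_irrefl 0 h2
  have hxnorm : 0 < ‖x‖ := norm_pos_iff.mpr hx0
  have hxnorm2 : ‖x‖^2 = nR * P := by rw [hx]; exact Real.sq_sqrt (mul_pos hnR0 hP).le
  set u := ‖x‖⁻¹ • x with hudef
  have hu : ‖u‖ = 1 := norm_smul_inv_norm hx0
  obtain ⟨⟨hta, htb⟩, hvr⟩ := hy
  set t : ℝ := ⟪u, y⟫ with htdef
  set v := y - t • u with hvdef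
  have huv : ⟪u, v⟫ = 0 := by
    rw [hvdef, inner_sub_right, real_inner_smul_right, real_inner_self_eq_norm_sq, hu]
    ring
  have hyv : y = t • u + v := by rw [hvdef]; abel
  have hy2 : ‖y‖^2 = t^2 + ‖v‖^2 := by
    rw [hyv, norm_add_sq_real, real_inner_smul_left, huv, norm_smul, Real.norm_eq_abs, hu,
      mul_one, sq_abs]
    ring
  have hta' : ρ * c1 ≤ t := hta
  have htpos : 0 < t := lt_of_lt_of_le (mul_pos hρpos hc10) hta'
  have htb' : t ≤ ρ * c2 := htb
  have hv : ‖v‖ ≤ ρ * s * d := hvr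
  have ht2 : t^2 ≤ ρ^2 * c2^2 := by
    have h := pow_le_pow_left₀ htpos.le htb' 2
    calc t^2 ≤ (ρ*c2)^2 := h
      _ = ρ^2 * c2^2 := by ring
  have hv2 : ‖v‖^2 ≤ ρ^2 * (s^2 * d^2) := by
    have h := pow_le_pow_left₀ (norm_nonneg v) hv 2
    calc ‖v‖^2 ≤ (ρ*s*d)^2 := h
      _ = ρ^2 * (s^2 * d^2) := by ring
  have hsum : ρ^2 * c2^2 + ρ^2 * (s^2 * d^2) = ρ^2 := by rw [hc22, hs2]; ring
  have h1 : ‖y‖^2 ≤ ρ^2 := by rw [hy2]; linarith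
  have hyρ : ‖y‖ ≤ ρ := by
    have h2 := Real.sqrt_le_sqrt h1
    rwa [Real.sqrt_sq (norm_nonneg y), Real.sqrt_sq hρpos.le] at h2
  refine ⟨hyρ, ?_, ?_⟩
  · -- ρ * ‖y‖ ≤ ⟪x, y⟫
    have hxy : ⟪x, y⟫ = ‖x‖ * t := by
      conv_lhs => rw [show x = ‖x‖ • u from (smul_inv_smul₀ (ne_of_gt hxnorm) x).symm]
      rw [real_inner_smul_left]
    have key : ρ^2 * ‖v‖^2 ≤ nR * N * t^2 := by
      have k1 : ρ^2 * ‖v‖^2 ≤ ρ^2 * (ρ^2 * (s^2 * d^2)) :=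
        mul_le_mul_of_nonneg_left hv2 (sq_nonneg ρ)
      have k1' : ρ^2 * (ρ^2 * (s^2 * d^2)) ≤ ρ^2 * ρ^2 * s^2 := by
        have e : ρ^2 * (ρ^2 * (s^2 * d^2)) = (ρ^2 * ρ^2 * s^2) * d^2 := by ring
        rw [e]
        exact mul_le_of_le_one_right (by positivity) hdd
      have k2 : ρ^2 * ρ^2 * s^2 = nR*(P-N) * (nR*(P-N)) * (N/P) := by rw [hρ2, hs2]
      have k4 : nR * N * (ρ * c1)^2 = nR*(P-N) * (nR*(P-N)) * (N/P) := by
        have e : nR * N * (ρ * c1)^2 = nR * N * (ρ^2 * c1^2) := by ring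
        rw [e, hρ2, hc12]
        field_simp
      have k3 : nR * N * (ρ * c1)^2 ≤ nR * N * t^2 := by
        have ht : (ρ*c1)^2 ≤ t^2 := pow_le_pow_left₀ (mul_pos hρpos hc10).le hta' 2
        exact mul_le_mul_of_nonneg_left ht (by positivity)
      linarith
    have hsq : (ρ * ‖y‖)^2 ≤ (‖x‖ * t)^2 := by
      have e1 : (ρ * ‖y‖)^2 = ρ^2*t^2 + ρ^2*‖v‖^2 := by rw [mul_pow, hy2]; ring
      have e2 : (‖x‖ * t)^2 = ρ^2*t^2 + nR*N*t^2 := by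
        rw [mul_pow, hxnorm2, hρ2]; ring
      rw [e1, e2]
      linarith
    have h2 := Real.sqrt_le_sqrt hsq
    rwa [Real.sqrt_sq (by positivity), Real.sqrt_sq (by positivity), ← hxy] at h2
  · -- y ≠ 0
    intro h
    rw [htdef, h, inner_zero_right] at htpos
    exact lt_irrefl 0 htpos

lemma decode_step {m : ℕ} {P N : ℝ} (hN : 0 < N) (hNP : N < P)
    (x y₀ : EuclideanSpace ℝ (Fin (m+1)))
    (hx : ‖x‖ = Real.sqrt (((m+1 : ℕ) : ℝ) * P))
    (h2 : Real.sqrt (((m+1 : ℕ) : ℝ) * (P-N)) * ‖y₀‖ ≤ ⟪x, y₀⟫) (h3 : y₀ ≠ 0) :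
    ‖x - (Real.sqrt (((m+1 : ℕ) : ℝ) * (P-N)) / ‖y₀‖) • y₀‖ ≤ Real.sqrt (((m+1 : ℕ) : ℝ) * N) := by
  have hP : 0 < P := hN.trans hNP
  set nR : ℝ := ((m+1 : ℕ) : ℝ) with hnRdef
  have hnR : 1 ≤ nR := by rw [hnRdef]; exact_mod_cast Nat.succ_le_succ (Nat.zero_le m)
  have hnR0 : 0 < nR := lt_of_lt_of_le one_pos hnR
  set ρ : ℝ := Real.sqrt (nR * (P-N)) with hρdef
  have hρpos : 0 < ρ := Real.sqrt_pos.mpr (mul_pos hnR0 (by linarith))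
  have hρ2 : ρ^2 = nR * (P-N) := Real.sq_sqrt (mul_pos hnR0 (by linarith)).le
  have hy₀ : 0 < ‖y₀‖ := norm_pos_iff.mpr h3
  set y := (ρ / ‖y₀‖) • y₀ with hydef
  have hyn : ‖y‖ = ρ := by
    rw [hydef, norm_smul, Real.norm_eq_abs, abs_of_nonneg (by positivity),
      div_mul_cancel₀ _ (ne_of_gt hy₀)]
  have hxnorm2 : ‖x‖^2 = nR * P := by rw [hx]; exact Real.sq_sqrt (mul_pos hnR0 hP).le
  have hinner : ρ^2 ≤ ⟪x, y⟫ := by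
    rw [hydef, real_inner_smul_right]
    have hc : 0 < ρ / ‖y₀‖ := by positivity
    calc ρ^2 = (ρ / ‖y₀‖) * (ρ * ‖y₀‖) := by field_simp
      _ ≤ (ρ / ‖y₀‖) * ⟪x, y₀⟫ := mul_le_mul_of_nonneg_left h2 hc.le
  have hsub2 : ‖x - y‖^2 ≤ nR * N := by
    rw [norm_sub_sq_real, hxnorm2, hyn]
    have e : ρ^2 = nR * (P-N) := hρ2
    linarith
  have h4 := Real.sqrt_le_sqrt hsub2
  rwa [Real.sqrt_sq (norm_nonneg _)] at h4

end Geometry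


/-- List-decoding converse for an omniscient adversary: let `0 < N < P` and `ε > 0`.
For all sufficiently large `n`, every spherical code `C` on the sphere of radius `√(nP)`
with `|C| ≥ 2^(n((1/2)log₂(P/N) + ε))` admits a point `y` with `‖y‖₂ = √(n(P-N))` whose
ball of radius `√(nN)` contains at least `2^(nε/2)` codewords. -/
theorem omniscient_list_decoding_converse (P N ε : ℝ)
    (hN : 0 < N) (hNP : N < P) (hε : 0 < ε) :
    ∃ n₀ : ℕ, ∀ n : ℕ, n₀ ≤ n →
      ∀ C : Finset (EuclideanSpace ℝ (Fin n)),
        (∀ x ∈ C, ‖x‖ = Real.sqrt ((n : ℝ) * P)) →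
        (2 : ℝ) ^ ((n : ℝ) * ((1 / 2) * Real.logb 2 (P / N) + ε)) ≤ (C.card : ℝ) →
        ∃ y : EuclideanSpace ℝ (Fin n), ‖y‖ = Real.sqrt ((n : ℝ) * (P - N)) ∧
          (2 : ℝ) ^ ((n : ℝ) * ε / 2) ≤
            (({x ∈ (C : Set (EuclideanSpace ℝ (Fin n))) |
                ‖x - y‖ ≤ Real.sqrt ((n : ℝ) * N)}).ncard : ℝ) := by
  classical
  have hP : 0 < P := hN.trans hNP
  have hNP0 : 0 < N/P := div_pos hN hP
  have hNP1 : N/P < 1 := (div_lt_one hP).mpr hNP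
  set s : ℝ := Real.sqrt (N/P) with hsdef
  have hs0 : 0 < s := Real.sqrt_pos.mpr hNP0
  have hs2 : s^2 = N/P := Real.sq_sqrt hNP0.le
  have hs1 : s < 1 := by
    have h := Real.sqrt_lt_sqrt hNP0.le hNP1
    rwa [Real.sqrt_one] at h
  set d : ℝ := (2:ℝ) ^ (-(ε/4)) with hddef
  have hd0 : 0 < d := Real.rpow_pos_of_pos two_pos _
  have hd1 : d < 1 := Real.rpow_lt_one_of_one_lt_of_neg one_lt_two (by linarith only [hε])
  have hdd : d^2 < 1 := pow_lt_one₀ hd0.le hd1 two_ne_zero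
  set c1 : ℝ := Real.sqrt (1 - N/P) with hc1def
  set c2 : ℝ := Real.sqrt (1 - (N/P)*d^2) with hc2def
  have hc12 : c1^2 = 1 - N/P := Real.sq_sqrt (by linarith only [hNP1])
  have hc10 : 0 < c1 := Real.sqrt_pos.mpr (by linarith only [hNP1])
  have hd2 : (N/P)*d^2 < N/P := mul_lt_of_lt_one_right hNP0 hdd
  have hc1c2 : c1 < c2 := Real.sqrt_lt_sqrt (by linarith only [hNP1]) (by linarith only [hd2])
  have hc20 : 0 < c2 := lt_trans hc10 hc1c2
  set g : ℝ := c2 - c1 with hgdef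
  have hg0 : 0 < g := by rw [hgdef]; linarith only [hc1c2]
  obtain ⟨k, hk⟩ := exists_nat_gt ((4/ε) * (Real.logb 2 (2*s/g)) + 1)
  refine ⟨max 1 k, fun n hn C hC hcard => ?_⟩
  obtain ⟨m, rfl⟩ : ∃ m, n = m + 1 := ⟨n - 1, by omega⟩
  set nR : ℝ := ((m+1 : ℕ) : ℝ) with hnRdef
  have hnR1 : 1 ≤ nR := by rw [hnRdef]; exact_mod_cast Nat.succ_le_succ (Nat.zero_le m)
  have hnR0 : 0 < nR := lt_of_lt_of_le one_pos hnR1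
  have hkn : ((4/ε) * (Real.logb 2 (2*s/g)) + 1) < nR := by
    have h1 : (k:ℝ) ≤ nR := by
      rw [hnRdef]; exact_mod_cast le_trans (le_max_right 1 k) hn
    linarith only [hk, h1]
  set ρ : ℝ := Real.sqrt (nR * (P-N)) with hρdef
  have hρ0 : 0 < ρ := Real.sqrt_pos.mpr (mul_pos hnR0 (by linarith only [hNP]))
  have hρ2 : ρ^2 = nR * (P-N) := Real.sq_sqrt (mul_pos hnR0 (by linarith only [hNP])).le
  set T : ℝ := (2:ℝ) ^ (nR * ε / 2) with hTdef
  have hT0 : 0 < T := Real.rpow_pos_of_pos two_pos _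
  by_contra hcon
  push_neg at hcon
  -- the cap sets
  set A : EuclideanSpace ℝ (Fin (m+1)) → Set (EuclideanSpace ℝ (Fin (m+1))) :=
    fun x => capSet (‖x‖⁻¹ • x) (ρ*c1) (ρ*c2) (ρ*s*d) with hAdef
  have hx0 : ∀ x ∈ C, x ≠ 0 := by
    intro x hx h
    have h1 := hC x hx
    rw [h, norm_zero] at h1
    have h2 : (0:ℝ) < Real.sqrt (nR * P) := Real.sqrt_pos.mpr (mul_pos hnR0 hP)
    rw [← h1] at h2; exact lt_irrefl 0 h2
  have hr0 : (0:ℝ) ≤ ρ*s*d := by positivity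
  have hAmeas : ∀ x ∈ C, MeasurableSet (A x) := by
    intro x hx
    obtain ⟨f, hf⟩ := capSet_eq_preimage (‖x‖⁻¹ • x) (norm_smul_inv_norm (hx0 x hx))
      (ρ*c1) (ρ*c2) (ρ*s*d) hr0
    rw [hAdef]
    simp only []
    rw [hf]
    exact (measurableSet_slabSet m _ _ _).preimage f.continuous.measurable
  have hAvol : ∀ x ∈ C, volume (A x)
      = ENNReal.ofReal (ρ*c2 - ρ*c1) * (ENNReal.ofReal ((ρ*s*d)^m) * unitW m) := by
    intro x hx
    rw [hAdef]
    exact volume_capSet (‖x‖⁻¹ • x) (norm_smul_inv_norm (hx0 x hx)) _ _ _ hr0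
  -- pointwise counting bound
  have count_bound : ∀ y₀ : EuclideanSpace ℝ (Fin (m+1)),
      (∑ x ∈ C, (A x).indicator (fun _ => (1:ℝ≥0∞)) y₀)
        ≤ (closedBall (0:EuclideanSpace ℝ (Fin (m+1))) ρ).indicator
            (fun _ => ENNReal.ofReal T) y₀ := by
    intro y₀
    by_cases hy₀ : ∃ x ∈ C, y₀ ∈ A x
    · obtain ⟨x₀, hx₀C, hx₀⟩ := hy₀
      have hcone₀ := mem_cone_of_mem_capSet hN hNP hd0 hd1.le x₀ y₀ (hC x₀ hx₀C) hx₀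
      have hy₀ne : y₀ ≠ 0 := hcone₀.2.2
      have hy₀n : 0 < ‖y₀‖ := norm_pos_iff.mpr hy₀ne
      have hmem : y₀ ∈ closedBall (0:EuclideanSpace ℝ (Fin (m+1))) ρ := by
        rw [mem_closedBall, dist_zero_right]; exact hcone₀.1
      rw [Set.indicator_of_mem hmem]
      set y := (ρ / ‖y₀‖) • y₀ with hydef
      have hyn : ‖y‖ = ρ := by
        rw [hydef, norm_smul, Real.norm_eq_abs, abs_of_nonneg (by positivity),
          div_mul_cancel₀ _ (ne_of_gt hy₀n)]
      have hYlt := hcon y hyn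
      have hsub : ↑(C.filter (fun x => y₀ ∈ A x)) ⊆
          {x ∈ (C : Set (EuclideanSpace ℝ (Fin (m+1)))) | ‖x - y‖ ≤ Real.sqrt (nR*N)} := by
        intro x hx
        rw [Finset.coe_filter, Set.mem_setOf_eq] at hx
        obtain ⟨hxC, hxA⟩ := hx
        have hcone := mem_cone_of_mem_capSet hN hNP hd0 hd1.le x y₀ (hC x hxC) hxA
        exact ⟨hxC, decode_step hN hNP x y₀ (hC x hxC) hcone.2.1 hcone.2.2⟩
      have hfin : {x ∈ (C : Set (EuclideanSpace ℝ (Fin (m+1)))) |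
          ‖x - y‖ ≤ Real.sqrt (nR*N)}.Finite :=
        C.finite_toSet.subset (Set.sep_subset _ _)
      have hcard_le : (C.filter (fun x => y₀ ∈ A x)).card ≤
          {x ∈ (C : Set (EuclideanSpace ℝ (Fin (m+1)))) | ‖x - y‖ ≤ Real.sqrt (nR*N)}.ncard := by
        rw [← Set.ncard_coe_finset]
        exact Set.ncard_le_ncard hsub hfin
      have hcount : ((C.filter (fun x => y₀ ∈ A x)).card : ℝ) < T := by
        have hcl := (Nat.cast_le (α := ℝ)).mpr hcard_le
        linarith only [hcl, hYlt]
      have hsum_eq : ∑ x ∈ C, (A x).indicator (fun _ => (1:ℝ≥0∞)) y₀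
          = ((C.filter (fun x => y₀ ∈ A x)).card : ℝ≥0∞) := by
        simp [Set.indicator_apply]
      rw [hsum_eq]
      calc ((C.filter (fun x => y₀ ∈ A x)).card : ℝ≥0∞)
          = ENNReal.ofReal (((C.filter (fun x => y₀ ∈ A x)).card : ℝ)) :=
            (ENNReal.ofReal_natCast _).symm
        _ ≤ ENNReal.ofReal T := ENNReal.ofReal_le_ofReal hcount.le
    · push_neg at hy₀
      have : ∑ x ∈ C, (A x).indicator (fun _ => (1:ℝ≥0∞)) y₀ = 0 :=
        Finset.sum_eq_zero fun x hx => Set.indicator_of_notMem (hy₀ x hx) _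
      rw [this]
      exact zero_le
  -- main volume chain
  have main : (C.card : ℝ≥0∞) * (ENNReal.ofReal (ρ*c2 - ρ*c1) * (ENNReal.ofReal ((ρ*s*d)^m) * unitW m))
      ≤ ENNReal.ofReal T * (ENNReal.ofReal (ρ - -ρ) * (ENNReal.ofReal (ρ^m) * unitW m)) := by
    calc (C.card : ℝ≥0∞) * (ENNReal.ofReal (ρ*c2 - ρ*c1) * (ENNReal.ofReal ((ρ*s*d)^m) * unitW m))
        = ∑ _x ∈ C, (ENNReal.ofReal (ρ*c2 - ρ*c1) * (ENNReal.ofReal ((ρ*s*d)^m) * unitW m)) := by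
          rw [Finset.sum_const, nsmul_eq_mul]
      _ = ∑ x ∈ C, volume (A x) := (Finset.sum_congr rfl hAvol).symm
      _ = ∑ x ∈ C, ∫⁻ y₀, (A x).indicator (fun _ => (1:ℝ≥0∞)) y₀ := by
          refine Finset.sum_congr rfl fun x hx => ?_
          rw [lintegral_indicator_const (hAmeas x hx), one_mul]
      _ = ∫⁻ y₀, ∑ x ∈ C, (A x).indicator (fun _ => (1:ℝ≥0∞)) y₀ :=
          (lintegral_finset_sum C fun x hx => measurable_const.indicator (hAmeas x hx)).symm
      _ ≤ ∫⁻ y₀, (closedBall (0:EuclideanSpace ℝ (Fin (m+1))) ρ).indicator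
            (fun _ => ENNReal.ofReal T) y₀ := lintegral_mono count_bound
      _ = ENNReal.ofReal T * volume (closedBall (0:EuclideanSpace ℝ (Fin (m+1))) ρ) :=
          lintegral_indicator_const measurableSet_closedBall _
      _ ≤ ENNReal.ofReal T * volume (slabSet m (-ρ) ρ ρ) :=
          mul_le_mul_right (measure_mono (closedBall_subset_slabSet m hρ0.le)) _
      _ = ENNReal.ofReal T * (ENNReal.ofReal (ρ - -ρ) * (ENNReal.ofReal (ρ^m) * unitW m)) := by
          rw [volume_slabSet m _ _ _ hρ0.le]
  -- translate to a real inequality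
  have hba : (0:ℝ) ≤ ρ*c2 - ρ*c1 := by
    have h := mul_le_mul_of_nonneg_left hc1c2.le hρ0.le
    linarith only [h]
  set RL : ℝ := (C.card : ℝ) * (ρ*c2 - ρ*c1) * ((ρ*s*d)^m) with hRLdef
  set RR : ℝ := T * (ρ - -ρ) * (ρ^m) with hRRdef
  have eL : (C.card : ℝ≥0∞) * (ENNReal.ofReal (ρ*c2 - ρ*c1) * (ENNReal.ofReal ((ρ*s*d)^m) * unitW m))
      = ENNReal.ofReal RL * unitW m := by
    rw [hRLdef, ENNReal.ofReal_mul (mul_nonneg (Nat.cast_nonneg _) hba),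
      ENNReal.ofReal_mul (Nat.cast_nonneg _), ENNReal.ofReal_natCast]
    ring
  have eR : ENNReal.ofReal T * (ENNReal.ofReal (ρ - -ρ) * (ENNReal.ofReal (ρ^m) * unitW m))
      = ENNReal.ofReal RR * unitW m := by
    rw [hRRdef, ENNReal.ofReal_mul (mul_nonneg hT0.le (by linarith only [hρ0])),
      ENNReal.ofReal_mul hT0.le]
    ring
  rw [eL, eR] at main
  have hRR0 : 0 ≤ RR := by
    rw [hRRdef]
    exact mul_nonneg (mul_nonneg hT0.le (by linarith only [hρ0])) (pow_nonneg hρ0.le m)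
  have hreal : RL ≤ RR := by
    have h1 : ENNReal.ofReal RL ≤ ENNReal.ofReal RR :=
      (ENNReal.mul_le_mul_iff_left (ne_of_gt (unitW_pos m)) (unitW_ne_top m)).mp main
    exact (ENNReal.ofReal_le_ofReal_iff hRR0).mp h1
  -- the numeric contradiction
  set E2 : ℝ := (2:ℝ) ^ (nR * ε) with hE2def
  set E4 : ℝ := (2:ℝ) ^ (nR * ε / 4) with hE4def
  have hE20 : 0 < E2 := Real.rpow_pos_of_pos two_pos _
  have hE40 : 0 < E4 := Real.rpow_pos_of_pos two_pos _
  have hE2split : E2 = T * E4 * E4 := by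
    rw [hE2def, hTdef, hE4def, ← Real.rpow_add two_pos, ← Real.rpow_add two_pos]
    congr 1
    ring
  have h1s : (0:ℝ) < 1/s := by positivity
  have hΛeq : (2:ℝ) ^ (nR * ((1/2) * Real.logb 2 (P/N) + ε)) = (1/s)^(m+1) * E2 := by
    have hPN : P/N = (1/s)^2 := by
      rw [div_pow, one_pow, hs2]
      rw [one_div_div]
    have hlogb : Real.logb 2 (P/N) = 2 * Real.logb 2 (1/s) := by
      rw [hPN, Real.logb_pow]
      norm_num
    have hexp : nR * ((1/2) * Real.logb 2 (P/N) + ε)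
        = Real.logb 2 (1/s) * nR + nR * ε := by
      rw [hlogb]; ring
    rw [hexp, Real.rpow_add two_pos, hE2def]
    congr 1
    rw [Real.rpow_mul two_pos.le, Real.rpow_logb two_pos (by norm_num) h1s, hnRdef,
      Real.rpow_natCast]
  have hΛcard : (1/s)^(m+1) * E2 ≤ (C.card : ℝ) := by rw [← hΛeq]; exact hcard
  have hss : (1/s)^(m+1) * s^m = 1/s := by
    have h1 : (1/s)^(m+1) * s^m = ((1/s)*s)^m * (1/s) := by rw [mul_pow, pow_succ]; ring
    rw [h1, one_div_mul_cancel hs0.ne', one_pow, one_mul]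
  have hdm : E4⁻¹ ≤ d^m := by
    have h1 : d^m = (2:ℝ) ^ (-(ε/4) * (m:ℝ)) := by
      rw [hddef, ← Real.rpow_natCast ((2:ℝ)^(-(ε/4))) m, ← Real.rpow_mul two_pos.le]
    have h2 : E4⁻¹ = (2:ℝ) ^ (-(nR * ε / 4)) := by
      rw [hE4def, ← Real.rpow_neg_one, ← Real.rpow_mul two_pos.le]
      congr 1; ring
    rw [h1, h2]
    apply Real.rpow_le_rpow_left_iff one_lt_two |>.mpr
    have hm : (m:ℝ) ≤ nR := by rw [hnRdef]; exact_mod_cast Nat.le_succ m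
    have h3 := mul_le_mul_of_nonneg_left hm (show (0:ℝ) ≤ ε/4 by linarith only [hε])
    linarith only [h3]
  have hE4gt : 2*s/g < E4 := by
    have h2sg : 0 < 2*s/g := by positivity
    have hL : Real.logb 2 (2*s/g) < nR * ε / 4 := by
      have h' := mul_lt_mul_of_pos_right hkn (show (0:ℝ) < ε/4 by linarith)
      have hid : ((4/ε) * Real.logb 2 (2*s/g) + 1) * (ε/4)
          = Real.logb 2 (2*s/g) + ε/4 := by field_simp
      linarith only [h', hid, hε]
    calc 2*s/g = (2:ℝ) ^ (Real.logb 2 (2*s/g)) :=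
          (Real.rpow_logb two_pos (by norm_num) h2sg).symm
      _ < E4 := by rw [hE4def]; exact (Real.rpow_lt_rpow_left_iff one_lt_two).mpr hL
  have hcore : 2*T < (C.card : ℝ) * (g * (s^m * d^m)) := by
    have step0 : 2*T < (1/s) * E2 * g * E4⁻¹ := by
      have e1 : 2*T = (2*s/g) * (T*(g/s)) := by field_simp
      have e2 : E4 * (T*(g/s)) = (1/s) * (T*E4*E4) * g * E4⁻¹ := by field_simp
      calc 2*T = (2*s/g) * (T*(g/s)) := e1
        _ < E4 * (T*(g/s)) := mul_lt_mul_of_pos_right hE4gt (by positivity)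
        _ = (1/s) * (T*E4*E4) * g * E4⁻¹ := e2
        _ = (1/s) * E2 * g * E4⁻¹ := by rw [← hE2split]
    have step1 : (1/s) * E2 * g * E4⁻¹ ≤ (C.card : ℝ) * (g * (s^m * d^m)) := by
      have e3 : (1/s) * E2 * g * E4⁻¹ = ((1/s)^(m+1) * E2) * (g * (s^m * E4⁻¹)) := by
        rw [show ((1/s)^(m+1) * E2) * (g * (s^m * E4⁻¹))
            = ((1/s)^(m+1) * s^m) * (E2 * g * E4⁻¹) from by ring, hss]
        ring
      rw [e3]
      have h4 : g * (s^m * E4⁻¹) ≤ g * (s^m * d^m) := by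
        have := mul_le_mul_of_nonneg_left hdm (show (0:ℝ) ≤ s^m by positivity)
        exact mul_le_mul_of_nonneg_left this hg0.le
      calc ((1/s)^(m+1) * E2) * (g * (s^m * E4⁻¹))
          ≤ ((1/s)^(m+1) * E2) * (g * (s^m * d^m)) :=
            mul_le_mul_of_nonneg_left h4 (by positivity)
        _ ≤ (C.card : ℝ) * (g * (s^m * d^m)) := by
            apply mul_le_mul_of_nonneg_right hΛcard
            positivity
    exact lt_of_lt_of_le step0 step1
  have hnum : RR < RL := by
    have hpow : (0:ℝ) < ρ^(m+1) := pow_pos hρ0 _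
    calc RR = (2*T) * ρ^(m+1) := by rw [hRRdef]; ring
      _ < ((C.card : ℝ) * (g * (s^m * d^m))) * ρ^(m+1) :=
          mul_lt_mul_of_pos_right hcore hpow
      _ = RL := by rw [hRLdef, hgdef]; ring
  linarith only [hreal, hnum]
end
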